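/- Under Assumptions (A1) and (A2) with err > 0, the infimum over α > 0 of the function α ↦ err/α + (−φ)*( −1/(C_err·α) ) is attained at α = ᾱ if and only if −1/(C_err·ᾱ) ∈ ∂(−φ)(C_err·err), and in that case the global minimizer u_ᾱ of the Tikhonov functional satisfies β·D_{u*}(u_ᾱ, u†) ≤ √(C_err)·φ(err). -/

import Mathlib

open scoped ENNReal

noncomputable section

/-- The Fenchel conjugate of `-φ` (extended by `+∞` to negative arguments),
`(−φ)*(s) = sup_{τ ≥ 0} (s·τ + φ(τ))`. -/
def negPhiStar (φ : ℝ → ℝ) (s : ℝ) : ℝ :=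
  sSup { y | ∃ τ ≥ (0 : ℝ), y = s * τ + φ τ }

/-- The convex subdifferential of `-φ` (viewed as a convex function on `[0,∞)`)
at a point `x ≥ 0`. -/
def negPhiSubdiff (φ : ℝ → ℝ) (x : ℝ) : Set ℝ :=
  { m | ∀ τ ≥ (0 : ℝ), m * (τ - x) ≤ φ x - φ τ }

/-- Evaluation `φ(τ)` of an index function at an extended argument `τ ∈ [0,∞]`,
with the convention `φ(∞) = ∞`. -/
def phiE (φ : ℝ → ℝ) (τ : ℝ≥0∞) : EReal :=
  if τ = ⊤ then (⊤ : EReal) else ((φ τ.toReal : ℝ) : EReal)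

/-- The Bregman distance `D_{u*}(u, u†) = R(u) − R(u†) − ⟨u*, u − u†⟩`. -/
def bregman {X : Type*} [NormedAddCommGroup X] [NormedSpace ℝ X]
    (R : X → EReal) (ustar : X →L[ℝ] ℝ) (udag u : X) : EReal :=
  R u - R udag - ((ustar (u - udag) : ℝ) : EReal)

lemma sq_le_sq_imp {u v : ℝ} (hu : 0 ≤ u) (hv : 0 ≤ v) (h : u^2 ≤ v^2) : u ≤ v := by
  nlinarith

lemma phi_concave {φ : ℝ → ℝ} (hnn : ∀ τ ≥ (0:ℝ), 0 ≤ φ τ)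
    (h2 : ConcaveOn ℝ (Set.Ici (0:ℝ)) fun τ => φ τ ^ 2) :
    ConcaveOn ℝ (Set.Ici (0:ℝ)) φ := by
  refine ⟨convex_Ici 0, fun a ha b hb p q hp hq hpq => ?_⟩
  have h := h2.2 ha hb hp hq hpq
  have hm : p • a + q • b ∈ Set.Ici (0:ℝ) := (convex_Ici 0) ha hb hp hq hpq
  simp only [smul_eq_mul] at h ⊢
  refine sq_le_sq_imp
    (add_nonneg (mul_nonneg hp (hnn a ha)) (mul_nonneg hq (hnn b hb))) (hnn _ hm) ?_
  nlinarith [mul_nonneg (mul_nonneg hp hq) (sq_nonneg (φ a - φ b))]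

lemma phi_sq_subhom {φ : ℝ → ℝ} (h2 : ConcaveOn ℝ (Set.Ici (0:ℝ)) fun τ => φ τ ^ 2)
    (hφ0 : φ 0 = 0) {x c : ℝ} (hx : 0 ≤ x) (hc : 1 ≤ c) :
    φ (c * x) ^ 2 ≤ c * φ x ^ 2 := by
  have hc0 : 0 < c := lt_of_lt_of_le one_pos hc
  have h := h2.2 (x := c * x) (y := 0) (Set.mem_Ici.mpr (by positivity)) (Set.mem_Ici.mpr le_rfl)
    (show (0:ℝ) ≤ 1/c by positivity)
    (show (0:ℝ) ≤ 1 - 1/c by rw [sub_nonneg]; exact div_le_one_of_le₀ hc (le_of_lt hc0))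
    (by field_simp; ring)
  simp only [smul_eq_mul, mul_zero, add_zero, hφ0] at h
  have hx' : 1/c * (c*x) = x := by field_simp
  rw [hx'] at h
  norm_num at h
  rw [inv_mul_le_iff₀ hc0] at h
  linarith [h]

-- existence of a nonpositive subgradient of -φ at an interior point
lemma exists_subgrad {φ : ℝ → ℝ} (hconc : ConcaveOn ℝ (Set.Ici (0:ℝ)) φ)
    (hmono : MonotoneOn φ (Set.Ici (0:ℝ))) {x : ℝ} (hx : 0 < x) :
    ∃ m ≤ 0, m ∈ negPhiSubdiff φ x := by
  set Sl : Set ℝ := {s | ∃ a, 0 ≤ a ∧ a < x ∧ s = (φ x - φ a)/(x - a)} with hSl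
  have hne : Sl.Nonempty := ⟨(φ x - φ 0)/(x - 0), 0, le_rfl, hx, rfl⟩
  have hlb : ∀ s ∈ Sl, 0 ≤ s := by
    rintro s ⟨a, ha0, hax, rfl⟩
    have := hmono (Set.mem_Ici.mpr ha0) (Set.mem_Ici.mpr hx.le) hax.le
    have hxa : 0 < x - a := by linarith
    exact div_nonneg (by linarith) hxa.le
  have hbdd : BddBelow Sl := ⟨0, hlb⟩
  set μ := sInf Sl with hμ
  have hμ0 : 0 ≤ μ := le_csInf hne hlb
  refine ⟨-μ, by linarith, ?_⟩
  intro τ hτ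
  rcases lt_trichotomy τ x with hlt | heq | hgt
  · have hμle : μ ≤ (φ x - φ τ)/(x - τ) := csInf_le hbdd ⟨τ, hτ, hlt, rfl⟩
    have hpos : 0 < x - τ := by linarith
    rw [le_div_iff₀ hpos] at hμle
    nlinarith
  · simp [heq]
  · -- τ > x : slope (x,τ) is a lower bound for Sl
    have hlow : (φ τ - φ x)/(τ - x) ≤ μ := by
      refine le_csInf hne ?_
      rintro s ⟨a, ha0, hax, rfl⟩
      exact hconc.slope_anti_adjacent (Set.mem_Ici.mpr ha0) (Set.mem_Ici.mpr (le_trans hx.le hgt.le)) hax hgt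
    have hpos : 0 < τ - x := by linarith
    rw [div_le_iff₀ hpos] at hlow
    nlinarith

lemma phi_growth {φ : ℝ → ℝ} (hnn : ∀ τ ≥ (0:ℝ), 0 ≤ φ τ)
    (hmono : MonotoneOn φ (Set.Ici (0:ℝ)))
    (h2 : ConcaveOn ℝ (Set.Ici (0:ℝ)) fun τ => φ τ ^ 2) (hφ0 : φ 0 = 0)
    {τ : ℝ} (hτ : 0 ≤ τ) : φ τ ≤ φ 1 * (Real.sqrt τ + 1) := by
  have hc : 0 ≤ φ 1 := hnn 1 zero_le_one
  have hr : 0 ≤ Real.sqrt τ := Real.sqrt_nonneg τ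
  rcases le_or_gt τ 1 with h1 | h1
  · have := hmono (Set.mem_Ici.mpr hτ) (Set.mem_Ici.mpr zero_le_one) h1
    nlinarith
  · have hsq : φ (τ * 1) ^ 2 ≤ τ * φ 1 ^ 2 := phi_sq_subhom h2 hφ0 zero_le_one h1.le
    rw [mul_one] at hsq
    have : φ τ ≤ Real.sqrt τ * φ 1 := by
      refine sq_le_sq_imp (hnn τ hτ) (mul_nonneg hr hc) ?_
      rw [mul_pow, Real.sq_sqrt hτ]
      exact hsq
    nlinarith

lemma negPhiStar_bddAbove {φ : ℝ → ℝ} (hnn : ∀ τ ≥ (0:ℝ), 0 ≤ φ τ)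
    (hmono : MonotoneOn φ (Set.Ici (0:ℝ)))
    (h2 : ConcaveOn ℝ (Set.Ici (0:ℝ)) fun τ => φ τ ^ 2) (hφ0 : φ 0 = 0)
    {s : ℝ} (hs : s < 0) :
    BddAbove { y | ∃ τ ≥ (0 : ℝ), y = s * τ + φ τ } := by
  refine ⟨φ 1 ^ 2 / (4 * (-s)) + φ 1, ?_⟩
  rintro y ⟨τ, hτ, rfl⟩
  have hφτ := phi_growth hnn hmono h2 hφ0 hτ
  have hc : 0 ≤ φ 1 := hnn 1 zero_le_one
  have key : s * τ + φ 1 * Real.sqrt τ ≤ φ 1 ^ 2 / (4 * (-s)) := by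
    rw [le_div_iff₀ (by linarith)]
    have hr2 : Real.sqrt τ ^ 2 = τ := Real.sq_sqrt hτ
    nlinarith [sq_nonneg (2 * s * Real.sqrt τ + φ 1), hr2, sq_nonneg s,
      mul_le_mul_of_nonneg_left hr2.le (sq_nonneg s), sq_nonneg (s * Real.sqrt τ)]
  linarith

lemma le_negPhiStar {φ : ℝ → ℝ} (hnn : ∀ τ ≥ (0:ℝ), 0 ≤ φ τ)
    (hmono : MonotoneOn φ (Set.Ici (0:ℝ)))
    (h2 : ConcaveOn ℝ (Set.Ici (0:ℝ)) fun τ => φ τ ^ 2) (hφ0 : φ 0 = 0)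
    {s : ℝ} (hs : s < 0) {τ : ℝ} (hτ : 0 ≤ τ) :
    s * τ + φ τ ≤ negPhiStar φ s :=
  le_csSup (negPhiStar_bddAbove hnn hmono h2 hφ0 hs) ⟨τ, hτ, rfl⟩

lemma negPhiStar_le {φ : ℝ → ℝ} {s a : ℝ} (ha : 0 ≤ a)
    (h : ∀ τ ≥ (0:ℝ), s * τ + φ τ ≤ a) : negPhiStar φ s ≤ a :=
  Real.sSup_le (by rintro y ⟨τ, hτ, rfl⟩; exact h τ hτ) ha

lemma real_le_of_forall_pos {a b : ℝ} (h : ∀ ε > (0:ℝ), a ≤ b + ε) : a ≤ b := by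
  by_contra hc
  push_neg at hc
  have := h ((a - b)/2) (by linarith)
  linarith

lemma part1_aux {φ : ℝ → ℝ} (hnn : ∀ τ ≥ (0:ℝ), 0 ≤ φ τ)
    (hmono : MonotoneOn φ (Set.Ici (0:ℝ)))
    (h2 : ConcaveOn ℝ (Set.Ici (0:ℝ)) fun τ => φ τ ^ 2) (hφ0 : φ 0 = 0)
    {x : ℝ} (hx : 0 < x) {sb : ℝ} (hsb : sb < 0) :
    (∀ s < (0:ℝ), -sb*x + negPhiStar φ sb ≤ -s*x + negPhiStar φ s) ↔ sb ∈ negPhiSubdiff φ x := by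
  constructor
  · intro h τ hτ
    obtain ⟨m, hm0, hmsub⟩ := exists_subgrad (phi_concave hnn h2) hmono hx
    have hm_x := hmsub 0 le_rfl
    rw [hφ0] at hm_x
    have key : ∀ ε > (0:ℝ), sb*(τ - x) ≤ φ x - φ τ + ε := by
      intro ε hε
      have hεx : 0 < ε/x := by positivity
      have hs : m - ε/x < 0 := by linarith
      have hh := h (m - ε/x) hs
      have hexx : (ε/x) * x = ε := div_mul_cancel₀ _ hx.ne'
      have b1 : negPhiStar φ (m - ε/x) ≤ (m - ε/x)*x + φ x + ε := by
        refine negPhiStar_le (by nlinarith) ?_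
        intro τ' hτ'
        have h1 := hmsub τ' hτ'
        have h2' : 0 ≤ (ε/x) * τ' := mul_nonneg hεx.le hτ'
        nlinarith
      have b2 := le_negPhiStar hnn hmono h2 hφ0 hsb hτ
      nlinarith
    have := real_le_of_forall_pos key
    linarith
  · intro hm s hs
    have hm0 := hm 0 le_rfl
    rw [hφ0] at hm0
    have b1 : negPhiStar φ sb ≤ sb*x + φ x := by
      refine negPhiStar_le (by nlinarith) ?_
      intro τ hτ
      have := hm τ hτ
      nlinarith
    have b2 := le_negPhiStar hnn hmono h2 hφ0 hs hx.le
    linarith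


/-- **Optimal a priori parameter choice (Theorem `det_conv`, part 2).**
Under Assumptions (A1) and (A2) with `err > 0`, the infimum over `α > 0` of
`α ↦ err/α + (−φ)*(−1/(C_err·α))` is attained at `α = ᾱ` if and only if
`−1/(C_err·ᾱ) ∈ ∂(−φ)(C_err·err)`, and in that case the minimizer `u_ᾱ` of the
Tikhonov functional satisfies `β·D_{u*}(u_ᾱ, u†) ≤ √C_err·φ(err)`. -/
theorem statement_2
    {X Y Yobs : Type*} [NormedAddCommGroup X] [NormedSpace ℝ X] [CompleteSpace X]
    (B : Set X) (udag : X) (hudag : udag ∈ B)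
    (F : X → Y) (gobs : Yobs)
    (S : Y → Yobs → ℝ≥0∞) (T : Y → Y → ℝ≥0∞)
    (Cerr err : ℝ) (hCerr : 1 ≤ Cerr) (herr : 0 < err)
    -- Assumption (A1)
    (hT0 : T (F udag) (F udag) = 0)
    (hA1 : ∀ u ∈ B,
      ((1 / Cerr : ℝ) : EReal) * ((T (F u) (F udag) : ℝ≥0∞) : EReal) - ((err : ℝ) : EReal)
        ≤ ((S (F u) gobs : ℝ≥0∞) : EReal) - ((S (F udag) gobs : ℝ≥0∞) : EReal))
    -- the penalty is proper and convex
    (R : X → EReal)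
    (hRbot : ∀ u, R u ≠ ⊥) (hRtop : ∃ u, R u ≠ ⊤)
    (hRconv : ∀ u v : X, ∀ a b : ℝ, 0 ≤ a → 0 ≤ b → a + b = 1 →
      R (a • u + b • v) ≤ (a : EReal) * R u + (b : EReal) * R v)
    -- `u*` is a subgradient of `R` at `u†`
    (ustar : X →L[ℝ] ℝ)
    (hsub : ∀ u : X, R udag + ((ustar (u - udag) : ℝ) : EReal) ≤ R u)
    -- Assumption (A2): variational source condition
    (φ : ℝ → ℝ) (β : ℝ) (hβ : 0 < β)
    (hφ0 : φ 0 = 0) (hφmono : MonotoneOn φ (Set.Ici (0 : ℝ)))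
    (hφnonneg : ∀ τ ≥ (0 : ℝ), 0 ≤ φ τ)
    (hφ2concave : ConcaveOn ℝ (Set.Ici (0 : ℝ)) fun τ => φ τ ^ 2)
    (hA2 : ∀ u ∈ B, ((β : ℝ) : EReal) * bregman R ustar udag u
        ≤ R u - R udag + phiE φ (T (F u) (F udag)))
    -- `u_ᾱ` is a global minimizer of the Tikhonov functional with parameter `ᾱ > 0`
    (αbar : ℝ) (hαbar : 0 < αbar) (uαbar : X) (huαbar : uαbar ∈ B)
    (hmin : ∀ u ∈ B,
      ((S (F uαbar) gobs : ℝ≥0∞) : EReal) + ((αbar : ℝ) : EReal) * R uαbar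
        ≤ ((S (F u) gobs : ℝ≥0∞) : EReal) + ((αbar : ℝ) : EReal) * R u) :
    ((∀ α > (0 : ℝ),
        err / αbar + negPhiStar φ (-(1 / (Cerr * αbar)))
          ≤ err / α + negPhiStar φ (-(1 / (Cerr * α))))
      ↔ -(1 / (Cerr * αbar)) ∈ negPhiSubdiff φ (Cerr * err)) ∧
    (-(1 / (Cerr * αbar)) ∈ negPhiSubdiff φ (Cerr * err) →
      ((β : ℝ) : EReal) * bregman R ustar udag uαbar
        ≤ ((Real.sqrt Cerr * φ err : ℝ) : EReal)) := by
  have hC0 : (0:ℝ) < Cerr := lt_of_lt_of_le one_pos hCerr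
  have hx : (0:ℝ) < Cerr * err := mul_pos hC0 herr
  have hCab : (0:ℝ) < Cerr * αbar := mul_pos hC0 hαbar
  have hsb : -(1/(Cerr*αbar)) < 0 := by
    have := one_div_pos.mpr hCab; linarith
  have hrep_bar : err / αbar = -(-(1/(Cerr*αbar))) * (Cerr*err) := by
    field_simp
  constructor
  · -- Part 1: iff
    rw [← part1_aux hφnonneg hφmono hφ2concave hφ0 hx hsb]
    constructor
    · intro h s hs
      have hd : 0 < -s := by linarith
      have hα : 0 < 1/(Cerr * (-s)) := by positivity
      have hh := h _ hα
      have e1 : -(1/(Cerr * (1/(Cerr * (-s))))) = s := by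
        field_simp
      have e2 : err / (1/(Cerr * (-s))) = -s * (Cerr*err) := by
        rw [one_div, div_inv_eq_mul]; ring
      rw [e1, e2] at hh
      linarith [hh, hrep_bar]
    · intro h α hα
      have hCα : (0:ℝ) < Cerr * α := mul_pos hC0 hα
      have hsα : -(1/(Cerr*α)) < 0 := by
        have := one_div_pos.mpr hCα; linarith
      have hh := h _ hsα
      have e2 : err / α = -(-(1/(Cerr*α))) * (Cerr*err) := by
        field_simp
      linarith [hh, hrep_bar, e2]
  · -- Part 2: error bound
    intro hm
    -- R udag is finite
    have hRud_ne_top : R udag ≠ ⊤ := by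
      intro hT
      obtain ⟨u0, hu0⟩ := hRtop
      have h1 := hsub u0
      rw [hT, EReal.top_add_coe] at h1
      exact hu0 (top_le_iff.mp h1)
    have hRd : R udag = (((R udag).toReal : ℝ) : EReal) :=
      (EReal.coe_toReal hRud_ne_top (hRbot udag)).symm
    set Rd := (R udag).toReal with hRd_def
    -- S(F udag) is finite
    have hSd_ne_top : S (F udag) gobs ≠ ⊤ := by
      intro hT
      have h1 := hA1 udag hudag
      rw [hT0, hT] at h1
      simp only [EReal.coe_ennreal_zero, mul_zero, zero_sub, EReal.coe_ennreal_top] at h1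
      rw [EReal.sub_top, le_bot_iff] at h1
      exact (EReal.coe_ne_bot _) h1
    have hSd : ((S (F udag) gobs : ℝ≥0∞) : EReal)
        = (((S (F udag) gobs).toReal : ℝ) : EReal) := by
      rw [← EReal.toReal_coe_ennreal]
      exact (EReal.coe_toReal (by simpa using hSd_ne_top) (EReal.coe_ennreal_ne_bot _)).symm
    set sd := (S (F udag) gobs).toReal with hsd_def
    have hminud := hmin udag hudag
    rw [hSd, hRd] at hminud
    -- R uαbar finite
    have hRa_ne_top : R uαbar ≠ ⊤ := by
      intro hT
      rw [hT, EReal.mul_top_of_pos (by exact_mod_cast hαbar), EReal.add_top_of_ne_bot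
        (EReal.coe_ennreal_ne_bot _)] at hminud
      rw [← EReal.coe_mul, ← EReal.coe_add, top_le_iff] at hminud
      exact (EReal.coe_ne_top _) hminud
    have hRa : R uαbar = (((R uαbar).toReal : ℝ) : EReal) :=
      (EReal.coe_toReal hRa_ne_top (hRbot uαbar)).symm
    set ra := (R uαbar).toReal with hra_def
    rw [hRa] at hminud
    -- S(F uαbar) finite
    have hSa_ne_top : S (F uαbar) gobs ≠ ⊤ := by
      intro hT
      rw [hT] at hminud
      rw [EReal.coe_ennreal_top, ← EReal.coe_mul, EReal.top_add_coe,
        ← EReal.coe_mul, ← EReal.coe_add, top_le_iff] at hminud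
      exact (EReal.coe_ne_top _) hminud
    have hSa : ((S (F uαbar) gobs : ℝ≥0∞) : EReal)
        = (((S (F uαbar) gobs).toReal : ℝ) : EReal) := by
      rw [← EReal.toReal_coe_ennreal]
      exact (EReal.coe_toReal (by simpa using hSa_ne_top) (EReal.coe_ennreal_ne_bot _)).symm
    set sa := (S (F uαbar) gobs).toReal with hsa_def
    rw [hSa] at hminud
    have hmin_real : sa + αbar * ra ≤ sd + αbar * Rd := by exact_mod_cast hminud
    -- T finite
    have h1 := hA1 uαbar huαbar
    rw [hSa, hSd] at h1
    have hT_ne_top : T (F uαbar) (F udag) ≠ ⊤ := by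
      intro hT
      rw [hT, EReal.coe_ennreal_top, EReal.mul_top_of_pos (by
        exact_mod_cast one_div_pos.mpr hC0), EReal.top_sub_coe,
        ← EReal.coe_sub, top_le_iff] at h1
      exact (EReal.coe_ne_top _) h1
    have hTe : ((T (F uαbar) (F udag) : ℝ≥0∞) : EReal)
        = (((T (F uαbar) (F udag)).toReal : ℝ) : EReal) := by
      rw [← EReal.toReal_coe_ennreal]
      exact (EReal.coe_toReal (by simpa using hT_ne_top) (EReal.coe_ennreal_ne_bot _)).symm
    set t' := (T (F uαbar) (F udag)).toReal with ht'_def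
    have ht'0 : 0 ≤ t' := ENNReal.toReal_nonneg
    rw [hTe] at h1
    have hA1_real : (1/Cerr) * t' - err ≤ sa - sd := by exact_mod_cast h1
    -- A2
    have h2 := hA2 uαbar huαbar
    rw [show phiE φ (T (F uαbar) (F udag)) = ((φ t' : ℝ) : EReal) by
      rw [phiE, if_neg hT_ne_top]] at h2
    rw [bregman, hRa, hRd] at h2
    set p := ustar (uαbar - udag) with hp_def
    have hA2_real : β * (ra - Rd - p) ≤ (ra - Rd) + φ t' := by exact_mod_cast h2
    -- subdifferential at t'
    have hm' := hm t' ht'0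
    -- φ(Cerr * err) ≤ √Cerr * φ err
    have hφC : φ (Cerr * err) ≤ Real.sqrt Cerr * φ err := by
      refine sq_le_sq_imp (hφnonneg _ hx.le)
        (mul_nonneg (Real.sqrt_nonneg _) (hφnonneg err herr.le)) ?_
      rw [mul_pow, Real.sq_sqrt hC0.le]
      exact phi_sq_subhom hφ2concave hφ0 herr.le hCerr
    -- combine (real arithmetic)
    have e1 : err - (1/Cerr)*t' = αbar * (-(1/(Cerr*αbar)) * (t' - Cerr*err)) := by
      field_simp; ring
    have hm'' : err - (1/Cerr)*t' ≤ αbar * (φ (Cerr*err) - φ t') := by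
      rw [e1]
      exact mul_le_mul_of_nonneg_left hm' hαbar.le
    have h3 : (1/Cerr)*t' - err ≤ αbar * (Rd - ra) := by nlinarith [hA1_real, hmin_real]
    have h4 : αbar * ((ra - Rd) + φ t') ≤ αbar * φ (Cerr*err) := by nlinarith [h3, hm'']
    have h5 : (ra - Rd) + φ t' ≤ φ (Cerr*err) := le_of_mul_le_mul_left h4 hαbar
    have hfinal : β * (ra - Rd - p) ≤ Real.sqrt Cerr * φ err := by linarith
    rw [bregman, hRa, hRd, ← hp_def]
    exact_mod_cast hfinal

end
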